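/- Let X be a finite set and T : X → ℝ a statistic that is a UMVUE (characterized by: for every H : X → ℝ with ∑_x H(x) P θ x = 0 for all θ, also ∑_x T(x) H(x) P θ x = 0 for all θ). Then T is complete: for any u : ℝ → ℝ with ∑_x u(T(x)) P θ x = 0 for all θ, one has u(T(x)) P θ x = 0 for all θ and x (i.e., u ∘ T vanishes off the null set). -/

import Mathlib

/-- Any UMVUE (covariance characterization) on a finite sample space is complete. -/
theorem umvue_complete
    {X Θ : Type*} [Fintype X]
    (P : Θ → X → ℝ)
    (hP0 : ∀ θ x, 0 ≤ P θ x)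
    (hP1 : ∀ θ, ∑ x, P θ x = 1)
    (T : X → ℝ)
    (hT : ∀ H : X → ℝ, (∀ θ, ∑ x, H x * P θ x = 0) →
        ∀ θ, ∑ x, T x * H x * P θ x = 0) :
    ∀ u : ℝ → ℝ, (∀ θ, ∑ x, u (T x) * P θ x = 0) →
      ∀ θ x, u (T x) * P θ x = 0 := by
  intro u hu θ x
  -- Step 1: all "moments" of u∘T vanish
  have hmom : ∀ n : ℕ, ∀ θ, ∑ y, (T y)^n * u (T y) * P θ y = 0 := by
    intro n
    induction n with
    | zero => simpa using hu
    | succ n ih =>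
      intro θ'
      have := hT (fun y => (T y)^n * u (T y)) ih θ'
      calc ∑ y, (T y)^(n+1) * u (T y) * P θ' y
          = ∑ y, T y * ((T y)^n * u (T y)) * P θ' y := by
            apply Finset.sum_congr rfl; intro y _; ring
        _ = 0 := this
  -- Step 2: interpolate u on the range of T by a polynomial p
  set s : Finset ℝ := Finset.image T Finset.univ with hs
  have hinj : Set.InjOn (id : ℝ → ℝ) ↑s := Function.injective_id.injOn
  set p : Polynomial ℝ := Lagrange.interpolate s id u with hp
  have hpeval : ∀ y : X, p.eval (T y) = u (T y) := by
    intro y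
    have hmem : T y ∈ s := Finset.mem_image_of_mem T (Finset.mem_univ y)
    rw [hp]; exact Lagrange.eval_interpolate_at_node u hinj hmem
  -- Step 3: ∑ u(T y)^2 * P θ y = 0
  have hsq : ∑ y, (u (T y))^2 * P θ y = 0 := by
    have : ∑ y, p.eval (T y) * u (T y) * P θ y = 0 := by
      have heval : ∀ t : ℝ, p.eval t =
          ∑ k ∈ Finset.range (p.natDegree + 1), p.coeff k * t ^ k := by
        intro t
        rw [Polynomial.eval_eq_sum_range]
      calc ∑ y, p.eval (T y) * u (T y) * P θ y
          = ∑ y, ∑ k ∈ Finset.range (p.natDegree + 1),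
              p.coeff k * ((T y)^k * u (T y) * P θ y) := by
            apply Finset.sum_congr rfl; intro y _
            rw [heval, Finset.sum_mul, Finset.sum_mul]
            apply Finset.sum_congr rfl; intro k _; ring
        _ = ∑ k ∈ Finset.range (p.natDegree + 1),
              p.coeff k * ∑ y, (T y)^k * u (T y) * P θ y := by
            rw [Finset.sum_comm]
            simp [Finset.mul_sum]
        _ = 0 := by
            apply Finset.sum_eq_zero; intro k _
            rw [hmom k θ, mul_zero]
    calc ∑ y, (u (T y))^2 * P θ y
        = ∑ y, p.eval (T y) * u (T y) * P θ y := by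
          apply Finset.sum_congr rfl; intro y _; rw [hpeval]; ring
      _ = 0 := this
  -- Step 4: nonneg terms summing to zero are all zero
  have hterm : (u (T x))^2 * P θ x = 0 := by
    have hnn : ∀ y ∈ Finset.univ, 0 ≤ (u (T y))^2 * P θ y := fun y _ =>
      mul_nonneg (sq_nonneg _) (hP0 θ y)
    exact (Finset.sum_eq_zero_iff_of_nonneg hnn).mp hsq x (Finset.mem_univ x)
  rcases mul_eq_zero.mp hterm with h | h
  · rw [pow_eq_zero_iff (by norm_num : 2 ≠ 0)] at h
    rw [h, zero_mul]
  · rw [h, mul_zero]
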